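/- In the simplex category Δ, for each k ≥ 2 there is a pushout square: the object [k] is the pushout of [k-1] and [1] along [0], where [0] → [k-1] picks out 0 and [0] → [1] picks out 1, with q : [1] → [k] given by q(i) = i and p : [k-1] → [k] given by p(t) = t+1. Consequently [k] is the colimit (iterated pushout) of k copies of [1] glued along [0]. -/

import Mathlib

/-!
STATEMENT 0: In the simplex category Δ, for each `k ≥ 2` (written `k = m + 2`)
there is a pushout square: `[k]` is the pushout of `[k-1]` and `[1]` along
`[0]`, where `[0] → [k-1]` picks out `0` and `[0] → [1]` picks out `1`, with
`q : [1] → [k]`, `q i = i`, and `p : [k-1] → [k]`, `p t = t + 1`.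
(Consequently, iterating this pushout, `[k]` is the colimit of `k` copies of
`[1]` glued along `[0]`.)
-/

open CategoryTheory

theorem stmt0 (m : ℕ) :
    IsPushout
      -- [0] ⟶ [k-1], 0 ↦ 0
      (SimplexCategory.mkHom (OrderHom.const _ 0) :
        SimplexCategory.mk 0 ⟶ SimplexCategory.mk (m + 1))
      -- [0] ⟶ [1], 0 ↦ 1
      (SimplexCategory.mkHom (OrderHom.const _ 1) :
        SimplexCategory.mk 0 ⟶ SimplexCategory.mk 1)
      -- p : [k-1] ⟶ [k], t ↦ t + 1
      (SimplexCategory.mkHom ⟨Fin.succ, fun a b h => by simp only [Fin.le_def, Fin.val_succ] at h ⊢; omega⟩ :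
        SimplexCategory.mk (m + 1) ⟶ SimplexCategory.mk (m + 2))
      -- q : [1] ⟶ [k], i ↦ i
      (SimplexCategory.mkHom ⟨Fin.castLE (by omega), fun _ _ h => h⟩ :
        SimplexCategory.mk 1 ⟶ SimplexCategory.mk (m + 2)) := by
  have weq : (SimplexCategory.mkHom (OrderHom.const _ 0) :
        SimplexCategory.mk 0 ⟶ SimplexCategory.mk (m + 1)) ≫
      (SimplexCategory.mkHom ⟨Fin.succ, fun a b h => by
          simp only [Fin.le_def, Fin.val_succ] at h ⊢; omega⟩ :
        SimplexCategory.mk (m + 1) ⟶ SimplexCategory.mk (m + 2)) =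
      (SimplexCategory.mkHom (OrderHom.const _ 1) :
        SimplexCategory.mk 0 ⟶ SimplexCategory.mk 1) ≫
      (SimplexCategory.mkHom ⟨Fin.castLE (by omega), fun _ _ h => h⟩ :
        SimplexCategory.mk 1 ⟶ SimplexCategory.mk (m + 2)) := by
    apply SimplexCategory.Hom.ext
    ext a
    rfl
  apply IsPushout.of_isColimit (c := Limits.PushoutCocone.mk _ _ weq)
  refine Limits.PushoutCocone.IsColimit.mk weq
    (fun s => SimplexCategory.mkHom
      ⟨fun a => if ha : a.val = 0 then s.inr.toOrderHom 0
        else s.inl.toOrderHom ⟨a.val - 1, by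
          have := a.isLt
          simp only [SimplexCategory.len_mk] at this ⊢
          omega⟩, ?_⟩) ?_ ?_ ?_
  · -- monotone
    intro a b hab
    have hcomm : s.inl.toOrderHom 0 = s.inr.toOrderHom 1 := by
      have := congrArg (fun f => SimplexCategory.Hom.toOrderHom f 0) s.condition
      simpa using this
    dsimp only
    by_cases ha : a.val = 0
    · by_cases hb : b.val = 0
      · simp [ha, hb]
      · simp only [ha, hb, dif_pos, dif_neg, not_false_iff]
        calc s.inr.toOrderHom 0 ≤ s.inr.toOrderHom 1 := s.inr.toOrderHom.monotone (by
              simp [Fin.le_def])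
          _ = s.inl.toOrderHom 0 := hcomm.symm
          _ ≤ s.inl.toOrderHom ⟨b.val - 1, _⟩ := s.inl.toOrderHom.monotone (by
              simp [Fin.le_def])
    · have hb : b.val ≠ 0 := by
        have := (Fin.le_def.mp hab); omega
      simp only [ha, hb, dif_neg, not_false_iff]
      exact s.inl.toOrderHom.monotone (by
        have := Fin.le_def.mp hab
        simp [Fin.le_def]; omega)
  · -- fac_left : p ≫ desc = s.inl
    intro s
    apply SimplexCategory.Hom.ext
    ext a
    simp only [SimplexCategory.comp_toOrderHom, SimplexCategory.mkHom,
      SimplexCategory.Hom.toOrderHom_mk, OrderHom.comp_coe, OrderHom.coe_mk,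
      Function.comp_apply]
    rw [dif_neg (by exact Nat.succ_ne_zero _)]
    congr 1
  · -- fac_right : q ≫ desc = s.inr
    intro s
    have hcomm : s.inl.toOrderHom 0 = s.inr.toOrderHom 1 := by
      have := congrArg (fun f => SimplexCategory.Hom.toOrderHom f 0) s.condition
      simpa using this
    apply SimplexCategory.Hom.ext
    ext a
    simp only [SimplexCategory.comp_toOrderHom, SimplexCategory.mkHom,
      SimplexCategory.Hom.toOrderHom_mk, OrderHom.comp_coe, OrderHom.coe_mk,
      Function.comp_apply]
    fin_cases a
    · rfl
    · rw [dif_neg (by exact Nat.one_ne_zero)]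
      exact congrArg Fin.val hcomm
  · -- uniq
    intro s e h₁ h₂
    apply SimplexCategory.Hom.ext
    ext a
    by_cases ha : a.val = 0
    · have h := congrArg (fun f => SimplexCategory.Hom.toOrderHom f (0 : Fin 2)) h₂
      simp only [SimplexCategory.comp_toOrderHom, SimplexCategory.mkHom,
        SimplexCategory.Hom.toOrderHom_mk, OrderHom.comp_coe, OrderHom.coe_mk,
        Function.comp_apply] at h
      simp only [SimplexCategory.mkHom, SimplexCategory.Hom.toOrderHom_mk,
        OrderHom.coe_mk]
      rw [dif_pos ha]
      have ha' : a = ⟨0, by simp only [SimplexCategory.len_mk]; omega⟩ := by ext; exact ha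
      rw [ha']
      exact congrArg Fin.val h
    · have ha2 : a.val - 1 < m + 2 := by
        have := a.isLt
        simp only [SimplexCategory.len_mk] at this
        omega
      have h := congrArg (fun f => SimplexCategory.Hom.toOrderHom f (⟨a.val - 1, ha2⟩ : Fin (m+2))) h₁
      simp only [SimplexCategory.comp_toOrderHom, SimplexCategory.mkHom,
        SimplexCategory.Hom.toOrderHom_mk, OrderHom.comp_coe, OrderHom.coe_mk,
        Function.comp_apply] at h
      simp only [SimplexCategory.mkHom, SimplexCategory.Hom.toOrderHom_mk,
        OrderHom.coe_mk]
      rw [dif_neg ha]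
      have ha' : a = ⟨(⟨a.val - 1, ha2⟩ : Fin (m+2)).val + 1,
          by simp only [SimplexCategory.len_mk]; omega⟩ := by ext; simp; omega
      conv_lhs => rw [ha']
      have := congrArg Fin.val h
      convert this using 3 <;>
        · ext
          simp [Fin.val_succ, Nat.mod_eq_of_lt ha2] <;> rfl
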